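/- Let p and q be relatively prime integers with p ≥ 1 and q ≥ 1. Then the minimal distance in the Farey tree Σ from △^{(0)} to a Farey triangle having p/q as a vertex equals S(p,q) − 1; that is, the unique triangle △_m containing p/q closest to △^{(0)} satisfies d(△_m, △^{(0)}) = S(p,q) − 1. -/

import Mathlib

/-- A Farey vertex is an element of `ℚ ∪ {∞}`; `none` represents `∞`. -/
abbrev FareyVertex := Option ℚ

/-- The numerator of the reduced form `a/b` (with `b ≥ 0`) of a Farey vertex; `∞ = 1/0`. -/
def fnum : FareyVertex → ℤ
  | none => 1
  | some r => r.num

/-- The denominator of the reduced form `a/b` (with `b ≥ 0`) of a Farey vertex; `∞ = 1/0`. -/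
def fden : FareyVertex → ℤ
  | none => 0
  | some r => (r.den : ℤ)

/-- Two Farey vertices with reduced forms `a/b` and `c/d` are Farey-neighbors if `|ad - bc| = 1`. -/
def FareyNeighbor (x y : FareyVertex) : Prop :=
  |fnum x * fden y - fden x * fnum y| = 1

/-- A Farey triangle: a set of three distinct pairwise Farey-neighbor Farey vertices. -/
@[ext]
structure FareyTriangle where
  verts : Finset FareyVertex
  card_eq : verts.card = 3
  neighbors : ∀ x ∈ verts, ∀ y ∈ verts, x ≠ y → FareyNeighbor x y

/-- The Farey tree `Σ`: vertices are the Farey triangles, two triangles being adjacent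
if and only if their intersection has exactly two elements. -/
def fareyTree : SimpleGraph FareyTriangle where
  Adj T T' := (T.verts ∩ T'.verts).card = 2
  symm := by
    constructor
    intro T T' h
    beta_reduce at h ⊢
    rwa [Finset.inter_comm]
  loopless := by
    constructor
    intro T h
    beta_reduce at h
    rw [Finset.inter_self, T.card_eq] at h
    omega

/-- The Farey vertex represented by the (not necessarily reduced) fraction `a/b`,
with the conventions `a/b = (-a)/(-b)` and `x/0 = ∞`. -/
def mkFarey (a b : ℤ) : FareyVertex :=
  if b = 0 then none else some ((a : ℚ) / (b : ℚ))

lemma neighbor_int_succ (i : ℤ) :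
    FareyNeighbor (some (i : ℚ)) (some ((i + 1 : ℤ) : ℚ)) := by
  have hn : (((i + 1 : ℤ) : ℚ)).num = i + 1 := Rat.num_intCast _
  have hd : (((i + 1 : ℤ) : ℚ)).den = 1 := Rat.den_intCast _
  simp only [FareyNeighbor, fnum, fden, hn, hd, Rat.num_intCast, Rat.den_intCast]
  simp

lemma neighbor_int_inf (i : ℤ) : FareyNeighbor (some (i : ℚ)) none := by
  simp [FareyNeighbor, fnum, fden]

lemma neighbor_symm {x y : FareyVertex} (h : FareyNeighbor x y) : FareyNeighbor y x := by
  unfold FareyNeighbor at h ⊢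
  rw [← abs_neg]
  convert h using 2
  ring

/-- `△⁽ⁱ⁾`: the Farey triangle with vertices `i`, `i+1` and `∞`. -/
def stdTriangle (i : ℤ) : FareyTriangle where
  verts := {some (i : ℚ), some ((i + 1 : ℤ) : ℚ), none}
  card_eq := by
    have h1 : (some (i : ℚ) : FareyVertex) ≠ some ((i + 1 : ℤ) : ℚ) := by
      simp only [ne_eq, Option.some.injEq]
      intro h
      have : (i : ℚ) = (i : ℚ) + 1 := by push_cast at h ⊢; linarith
      linarith
    simp [Finset.card_insert_of_notMem, h1]
  neighbors := by
    intro x hx y hy hxy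
    have h1 := neighbor_int_succ i
    have h2 := neighbor_int_inf i
    have h3 := neighbor_int_inf (i + 1)
    simp only [Finset.mem_insert, Finset.mem_singleton] at hx hy
    rcases hx with rfl | rfl | rfl <;> rcases hy with rfl | rfl | rfl <;>
      first
        | exact absurd rfl hxy
        | assumption
        | exact neighbor_symm h1
        | exact neighbor_symm h2
        | exact neighbor_symm h3

/-- `S p q` is the sum of the partial quotients in the expansion of `p/q`
as a regular continued fraction (for coprime `p ≥ 0`, `q ≥ 1`), with `S 0 1 = 0`. -/
def S (p q : ℕ) : ℕ :=
  if h : q = 0 then 0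
  else p / q + S q (p % q)
termination_by q
decreasing_by exact Nat.mod_lt p (Nat.pos_of_ne_zero h)



lemma S_eq (p q : ℕ) : S p q = if q = 0 then 0 else p / q + S q (p % q) := by
  rw [S]; simp

lemma S_zero_right (p : ℕ) : S p 0 = 0 := by rw [S_eq]; simp

lemma S_one (p : ℕ) : S p 1 = p := by
  rw [S_eq]; simp [Nat.mod_one, S_zero_right]

lemma S_swap {p q : ℕ} (h : p < q) : S p q = S q p := by
  rw [S_eq]
  have h1 : p / q = 0 := Nat.div_eq_of_lt h
  have h2 : p % q = p := Nat.mod_eq_of_lt h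
  have : q ≠ 0 := by omega
  simp [this, h1, h2]

lemma S_sub {p q : ℕ} (hq : 1 ≤ q) (h : q ≤ p) : S p q = S (p - q) q + 1 := by
  have hq0 : q ≠ 0 := by omega
  have h1 : p / q = (p - q) / q + 1 := by
    conv_lhs => rw [← Nat.sub_add_cancel h]
    rw [Nat.add_div_right _ (by omega)]
  have h2 : p % q = (p - q) % q := by
    conv_lhs => rw [← Nat.sub_add_cancel h]
    rw [Nat.add_mod_right]
  rw [S_eq, S_eq (p - q), if_neg hq0, if_neg hq0, h1, h2]
  omega

lemma S_pos {p q : ℕ} (hp : 1 ≤ p) (hq : 1 ≤ q) : 1 ≤ S p q := by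
  rcases le_or_gt q p with h | h
  · rw [S_sub hq h]; omega
  · rw [S_swap h, S_sub hp (le_of_lt h)]; omega

lemma S_two (k : ℕ) : S (2 * k + 1) 2 = k + 2 := by
  rw [S_eq]
  have h1 : (2 * k + 1) / 2 = k := by omega
  have h2 : (2 * k + 1) % 2 = 1 := by omega
  simp [h1, h2, S_one]

lemma S_two_ge {p q : ℕ} (h : Nat.Coprime p q) (hp : 1 ≤ p) (hq : 2 ≤ q) : 2 ≤ S p q := by
  rcases le_or_gt q p with hle | hlt
  · rw [S_sub (by omega) hle]
    have hp' : 1 ≤ p - q := by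
      rcases Nat.lt_or_ge q p with h' | h'
      · omega
      · have hpq : p = q := by omega
        subst hpq
        have := (Nat.coprime_self p).mp h
        omega
    have : 1 ≤ S (p - q) q := S_pos hp' (by omega)
    omega
  · rw [S_swap hlt]
    rcases Nat.eq_or_lt_of_le hp with h1 | h1
    · rw [← h1, S_one]; omega
    · have hle : p ≤ q := le_of_lt hlt
      rw [S_sub (by omega) (le_of_lt hlt)]
      have h2 : 1 ≤ q - p := by
        by_contra h3
        have : q = p := by omega
        omega
      have := S_pos h2 (by omega : 1 ≤ p)
      omega

/-- Elder lemma: the `S`-value of a mediant is one more than that of its elder parent. -/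
lemma L_aux : ∀ (n p1 q1 p2 q2 : ℕ), p1 + p2 + q1 + q2 ≤ n → 1 ≤ q2 → q2 < q1 →
    (p1 * q2 + 1 = p2 * q1 ∨ p2 * q1 + 1 = p1 * q2) →
    S (p1 + p2) (q1 + q2) = S p1 q1 + 1 := by
  intro n
  induction n with
  | zero => intro p1 q1 p2 q2 h h2 h12 _; omega
  | succ n ih =>
    intro p1 q1 p2 q2 hn h2 h12 hdet
    have hq1 : 2 ≤ q1 := by omega
    -- p1 ≠ q1
    have hp1q1 : p1 ≠ q1 := by
      rintro rfl
      have hdvd : p1 ∣ 1 := by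
        rcases hdet with h | h
        · have : p1 ∣ p2 * p1 - p1 * q2 := Nat.dvd_sub (dvd_mul_left p1 p2) (dvd_mul_right p1 q2)
          rwa [show p2 * p1 - p1 * q2 = 1 by omega] at this
        · have : p1 ∣ p1 * q2 - p2 * p1 := Nat.dvd_sub (dvd_mul_right p1 q2) (dvd_mul_left p1 p2)
          rwa [show p1 * q2 - p2 * p1 = 1 by omega] at this
      have := Nat.le_of_dvd one_pos hdvd
      omega
    -- exclusion: ¬(q1 < p1 ∧ p2 < q2)
    have excl1 : ¬(q1 < p1 ∧ p2 < q2) := by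
      rintro ⟨ha, hb⟩
      rcases hdet with h | h <;> nlinarith
    -- exclusion: ¬(p1 < q1 ∧ q2 < p2)
    have excl2 : ¬(p1 < q1 ∧ q2 < p2) := by
      rintro ⟨ha, hb⟩
      rcases hdet with h | h <;> nlinarith
    -- exclusion: ¬(p1 < p2 ∧ q2 < q1) : gives p2 ≤ p1
    have hord : p2 ≤ p1 := by
      by_contra hc
      push_neg at hc
      rcases hdet with h | h <;> nlinarith
    rcases le_or_gt q1 p1 with hA | hB
    · -- Case A : q1 < p1, q2 ≤ p2
      have hp1 : q1 < p1 := lt_of_le_of_ne hA (Ne.symm hp1q1)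
      have hp2 : q2 ≤ p2 := by
        by_contra hc; push_neg at hc; exact excl1 ⟨hp1, hc⟩
      have hdet' : (p1 - q1) * q2 + 1 = (p2 - q2) * q1 ∨
          (p2 - q2) * q1 + 1 = (p1 - q1) * q2 := by
        rw [Nat.sub_mul, Nat.sub_mul]
        have hle : q1 * q2 ≤ p1 * q2 := Nat.mul_le_mul_right _ (le_of_lt hp1)
        have hle2 : q2 * q1 ≤ p2 * q1 := Nat.mul_le_mul_right _ hp2
        rcases hdet with h | h
        · left
          zify [hle, hle2]
          have hz : (p1 : ℤ) * q2 + 1 = p2 * q1 := by exact_mod_cast congrArg (Nat.cast : ℕ → ℤ) h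
          linear_combination hz
        · right
          zify [hle, hle2]
          have hz : (p2 : ℤ) * q1 + 1 = p1 * q2 := by exact_mod_cast congrArg (Nat.cast : ℕ → ℤ) h
          linear_combination hz
      have ih1 := ih (p1 - q1) q1 (p2 - q2) q2 (by omega) h2 h12 hdet'
      have e1 : S (p1 + p2) (q1 + q2) = S (p1 + p2 - (q1 + q2)) (q1 + q2) + 1 :=
        S_sub (by omega) (by omega)
      have e2 : p1 + p2 - (q1 + q2) = (p1 - q1) + (p2 - q2) := by omega
      have e3 : S p1 q1 = S (p1 - q1) q1 + 1 := S_sub (by omega) (by omega)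
      rw [e1, e2, ih1, e3]
    · -- Case B : p1 < q1, p2 ≤ q2
      have hp2 : p2 ≤ q2 := by
        by_contra hc; push_neg at hc; exact excl2 ⟨hB, hc⟩
      rcases Nat.eq_zero_or_pos p2 with hz | hpos
      · -- B3 : p2 = 0
        subst hz
        rcases hdet with h | h
        · simp at h
        · simp at h
          have h1 : p1 = 1 ∧ q2 = 1 := by
            constructor
            · exact Nat.eq_one_of_mul_eq_one_right h.symm
            · exact Nat.eq_one_of_mul_eq_one_left h.symm
          obtain ⟨hp1, hq2⟩ := h1
          subst hp1; subst hq2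
          have g1 : S (1 + 0) (q1 + 1) = q1 + 1 := by
            rw [show (1 + 0 : ℕ) = 1 by rfl, S_swap (by omega), S_one]
          have g2 : S 1 q1 = q1 := by rw [S_swap (by omega), S_one]
          rw [g1, g2]
      · rcases eq_or_ne p1 p2 with heq | hne
        · -- B2 : p1 = p2 ≥ 1
          rcases hdet with h | h
          · -- p1*q2 + 1 = p1*q1 → p1 = 1, q1 = q2+1
            rw [← heq] at h
            have hd : p1 * (q1 - q2) = 1 := by
              rw [Nat.mul_sub]
              omega
            have hp1' : p1 = 1 := Nat.eq_one_of_mul_eq_one_right hd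
            have hq12 : q1 = q2 + 1 := by
              have := Nat.eq_one_of_mul_eq_one_left hd
              omega
            subst hp1'
            rw [← heq, hq12]
            have g1 : S (1 + 1) (q2 + 1 + q2) = q2 + 2 := by
              rw [show (1 + 1 : ℕ) = 2 by rfl, show q2 + 1 + q2 = 2 * q2 + 1 by ring,
                S_swap (by omega), S_two]
            have g2 : S 1 (q2 + 1) = q2 + 1 := by rw [S_swap (by omega), S_one]
            rw [g1, g2]
          · -- p2*q1 + 1 = p1*q2 with p1 = p2, q2 < q1 : impossible
            exfalso
            rw [← heq] at h
            nlinarith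
        · -- B1 : 1 ≤ p2 < p1 < q1
          have hp12 : p2 < p1 := lt_of_le_of_ne hord (Ne.symm hne)
          have hp1pos : 1 ≤ p1 := by omega
          -- child < 1, swap and subtract
          have hc1 : p1 + p2 < q1 + q2 := by omega
          have hdet' : (q1 - p1) * p2 + 1 = (q2 - p2) * p1 ∨
              (q2 - p2) * p1 + 1 = (q1 - p1) * p2 := by
            rw [Nat.sub_mul, Nat.sub_mul]
            have hle : p1 * p2 ≤ q1 * p2 := Nat.mul_le_mul_right _ (le_of_lt hB)
            have hle2 : p2 * p1 ≤ q2 * p1 := Nat.mul_le_mul_right _ hp2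
            rcases hdet with h | h
            · right
              zify [hle, hle2]
              have hz : (p1 : ℤ) * q2 + 1 = p2 * q1 := by exact_mod_cast congrArg (Nat.cast : ℕ → ℤ) h
              linear_combination hz
            · left
              zify [hle, hle2]
              have hz : (p2 : ℤ) * q1 + 1 = p1 * q2 := by exact_mod_cast congrArg (Nat.cast : ℕ → ℤ) h
              linear_combination hz
          have ih1 := ih (q1 - p1) p1 (q2 - p2) p2 (by omega) hpos hp12 hdet'
          have e1 : S (p1 + p2) (q1 + q2) = S (q1 + q2) (p1 + p2) := S_swap hc1
          have e2 : S (q1 + q2) (p1 + p2) = S (q1 + q2 - (p1 + p2)) (p1 + p2) + 1 :=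
            S_sub (by omega) (by omega)
          have e3 : q1 + q2 - (p1 + p2) = (q1 - p1) + (q2 - p2) := by omega
          have e4 : S p1 q1 = S q1 p1 := S_swap hB
          have e5 : S q1 p1 = S (q1 - p1) p1 + 1 := S_sub (by omega) (by omega)
          rw [e1, e2, e3, ih1, e4, e5]

lemma L {p1 q1 p2 q2 : ℕ} (h2 : 1 ≤ q2) (h12 : q2 < q1)
    (hdet : p1 * q2 + 1 = p2 * q1 ∨ p2 * q1 + 1 = p1 * q2) :
    S (p1 + p2) (q1 + q2) = S p1 q1 + 1 :=
  L_aux (p1 + p2 + q1 + q2) p1 q1 p2 q2 le_rfl h2 h12 hdet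

/-- Monotonicity along fans: a neighbor with a larger denominator has `S`-value at least as big. -/
lemma Q_aux : ∀ (n p q c d : ℕ), d ≤ n → 1 ≤ p → 1 ≤ q → q < d →
    (p * d + 1 = c * q ∨ c * q + 1 = p * d) → S p q ≤ S c d := by
  intro n
  induction n with
  | zero => intro p q c d h _ _ _ _; omega
  | succ n ih =>
    intro p q c d hn hp hq hqd hdet
    have hpc : p ≤ c := by
      by_contra hcon
      push_neg at hcon
      rcases hdet with h | h <;> nlinarith
    rcases lt_trichotomy q (d - q) with h1 | h1 | h1
    · -- elder of (c,d) is (c-p, d-q)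
      have hdet' : (c - p) * q + 1 = p * (d - q) ∨ p * (d - q) + 1 = (c - p) * q := by
        rw [Nat.sub_mul, Nat.mul_sub]
        have hle : p * q ≤ c * q := Nat.mul_le_mul_right _ hpc
        have hle2 : p * q ≤ p * d := Nat.mul_le_mul_left _ (le_of_lt hqd)
        rcases hdet with h | h
        · right
          zify [hle, hle2]
          have hz : (p : ℤ) * d + 1 = c * q := by exact_mod_cast congrArg (Nat.cast : ℕ → ℤ) h
          linear_combination hz
        · left
          zify [hle, hle2]
          have hz : (c : ℤ) * q + 1 = p * d := by exact_mod_cast congrArg (Nat.cast : ℕ → ℤ) h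
          linear_combination hz
      -- L with p1 = c-p, q1 = d-q, p2 = p, q2 = q
      have hL := L (p1 := c - p) (q1 := d - q) (p2 := p) (q2 := q) hq h1 ?_
      · have e1 : c - p + p = c := by omega
        have e2 : d - q + q = d := by omega
        rw [e1, e2] at hL
        have hQ : S p q ≤ S (c - p) (d - q) := by
          apply ih p q (c - p) (d - q) (by omega) hp hq h1
          rcases hdet' with h | h
          · right; omega
          · left; omega
        omega
      · rcases hdet' with h | h
        · left; omega
        · right; omega
    · -- q = d - q : q = 1, d = 2
      have hd2 : d = 2 * q := by omega
      have hq1 : q = 1 := by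
        have hdvd : q ∣ 1 := by
          rcases hdet with h | h
          · have : q ∣ c * q - p * d := by
              apply Nat.dvd_sub (dvd_mul_left q c)
              rw [hd2]
              exact ⟨p * 2, by ring⟩
            rwa [show c * q - p * d = 1 by omega] at this
          · have : q ∣ p * d - c * q := by
              apply Nat.dvd_sub _ (dvd_mul_left q c)
              rw [hd2]
              exact ⟨p * 2, by ring⟩
            rwa [show p * d - c * q = 1 by omega] at this
        have := Nat.le_of_dvd one_pos hdvd
        omega
      subst hq1
      have hd : d = 2 := by omega
      subst hd
      rw [S_one]
      rcases hdet with h | h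
      · have hc : c = 2 * p + 1 := by omega
        rw [hc, S_two]
        omega
      · have hc : c = 2 * (p - 1) + 1 := by omega
        rw [hc, S_two]
        omega
    · -- elder of (c,d) is (p,q) : S c d = S p q + 1
      have hdq : 1 ≤ d - q := by omega
      have hdet' : p * (d - q) + 1 = (c - p) * q ∨ (c - p) * q + 1 = p * (d - q) := by
        rw [Nat.sub_mul, Nat.mul_sub]
        have hle : p * q ≤ c * q := Nat.mul_le_mul_right _ hpc
        have hle2 : p * q ≤ p * d := Nat.mul_le_mul_left _ (le_of_lt hqd)
        rcases hdet with h | h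
        · left
          zify [hle, hle2]
          have hz : (p : ℤ) * d + 1 = c * q := by exact_mod_cast congrArg (Nat.cast : ℕ → ℤ) h
          linear_combination hz
        · right
          zify [hle, hle2]
          have hz : (c : ℤ) * q + 1 = p * d := by exact_mod_cast congrArg (Nat.cast : ℕ → ℤ) h
          linear_combination hz
      have hL := L (p1 := p) (q1 := q) (p2 := c - p) (q2 := d - q) hdq h1 hdet'
      have e1 : p + (c - p) = c := by omega
      have e2 : q + (d - q) = d := by omega
      rw [e1, e2] at hL
      omega

lemma Q {p q c d : ℕ} (hp : 1 ≤ p) (hq : 1 ≤ q) (hqd : q < d)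
    (hdet : p * d + 1 = c * q ∨ c * q + 1 = p * d) : S p q ≤ S c d :=
  Q_aux d p q c d le_rfl hp hq hqd hdet

/-- Fan growth: the mediant with any neighbor has strictly larger `S`-value. -/
lemma M {p q c d : ℕ} (hp : 1 ≤ p) (hq : 1 ≤ q) (hd : 1 ≤ d)
    (hdet : p * d + 1 = c * q ∨ c * q + 1 = p * d) :
    S p q + 1 ≤ S (p + c) (q + d) := by
  rcases lt_trichotomy d q with h1 | h1 | h1
  · -- elder (p,q)
    have hL := L (p1 := p) (q1 := q) (p2 := c) (q2 := d) hd h1 ?_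
    · omega
    · rcases hdet with h | h
      · left; omega
      · right; omega
  · -- q = d : q = d = 1
    have hdvd : q ∣ 1 := by
      rcases hdet with h | h
      · have h2 : q ∣ c * q - p * d := by
          apply Nat.dvd_sub (dvd_mul_left q c)
          rw [h1]; exact dvd_mul_left q p
        rwa [show c * q - p * d = 1 by omega] at h2
      · have h2 : q ∣ p * d - c * q := by
          apply Nat.dvd_sub _ (dvd_mul_left q c)
          rw [h1]; exact dvd_mul_left q p
        rwa [show p * d - c * q = 1 by omega] at h2
    have hq1 : q = 1 := by
      have := Nat.le_of_dvd one_pos hdvd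
      omega
    have hd1 : d = 1 := by omega
    subst hq1
    subst hd1
    rw [S_one]
    simp only [mul_one] at hdet
    rcases hdet with h | h
    · have : p + c = 2 * p + 1 := by omega
      rw [this, show (1 + 1 : ℕ) = 2 by rfl, S_two]
      omega
    · have : p + c = 2 * (p - 1) + 1 := by omega
      rw [this, show (1 + 1 : ℕ) = 2 by rfl, S_two]
      have := S_two (p - 1)
      omega
  · -- elder (c,d)
    have hL := L (p1 := c) (q1 := d) (p2 := p) (q2 := q) hq h1 ?_
    · have hQ : S p q ≤ S c d := Q hp hq h1 hdet
      rw [show c + p = p + c by ring, show d + q = q + d by ring] at hL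
      omega
    · rcases hdet with h | h
      · right; omega
      · left; omega

/-! ### Vertex basics -/

lemma fden_nonneg (v : FareyVertex) : 0 ≤ fden v := by
  cases v with
  | none => simp [fden]
  | some r => simp [fden]

lemma fden_some_pos (r : ℚ) : 0 < fden (some r) := by
  simp only [fden]
  exact_mod_cast r.pos

lemma vertex_ext {v w : FareyVertex} (h1 : fnum v = fnum w) (h2 : fden v = fden w) : v = w := by
  cases v with
  | none => cases w with
    | none => rfl
    | some r => exfalso; simp only [fden] at h2; have := r.pos; omega
  | some r => cases w with
    | none => exfalso; simp only [fden] at h2; have := r.pos; omega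
    | some s =>
      simp only [fnum, fden, Nat.cast_inj] at h1 h2
      congr 1
      exact Rat.ext h1 h2

lemma vertex_coprime (v : FareyVertex) : Int.gcd (fnum v) (fden v) = 1 := by
  cases v with
  | none => simp [fnum, fden]
  | some r =>
    simp only [fnum, fden]
    rw [Int.gcd]
    simp [Int.natAbs_natCast]
    exact r.reduced

lemma mk_num_den {a b : ℤ} (hb : 0 < b) (h : Int.gcd a b = 1) :
    fnum (mkFarey a b) = a ∧ fden (mkFarey a b) = b := by
  have hb0 : b ≠ 0 := by omega
  rw [mkFarey, if_neg hb0]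
  have hcop : Nat.Coprime a.natAbs b.natAbs := h
  constructor
  · simp only [fnum]
    exact Rat.num_div_eq_of_coprime hb hcop
  · simp only [fden]
    exact Rat.den_div_eq_of_coprime hb hcop

lemma mk_self (r : ℚ) : mkFarey r.num (r.den : ℤ) = some r := by
  have hd : (r.den : ℤ) ≠ 0 := by exact_mod_cast r.den_nz
  rw [mkFarey, if_neg hd]
  congr 1
  push_cast
  exact r.num_div_den

lemma coprime_of_det {a b c d : ℤ} (h : |a * d - b * c| = 1) : Int.gcd a b = 1 := by
  rcases abs_eq (by norm_num : (0:ℤ) ≤ 1) |>.mp h with h' | h'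
  · exact Int.isCoprime_iff_gcd_eq_one.mp ⟨d, -c, by linarith⟩
  · exact Int.isCoprime_iff_gcd_eq_one.mp ⟨-d, c, by linarith⟩

/-- Cramer: a common neighbor of two neighbors is a signed sum. -/
lemma comb {a b c d e f : ℤ} (h1 : |a * d - b * c| = 1) (h2 : |a * f - b * e| = 1)
    (h3 : |c * f - d * e| = 1) :
    (e = a + c ∧ f = b + d) ∨ (e = -a - c ∧ f = -b - d) ∨
    (e = a - c ∧ f = b - d) ∨ (e = c - a ∧ f = d - b) := by
  have hDe : (a * d - b * c) * e = (e * d - f * c) * a + (a * f - b * e) * c := by ring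
  have hDf : (a * d - b * c) * f = (e * d - f * c) * b + (a * f - b * e) * d := by ring
  have hD1 : a * d - b * c = 1 ∨ a * d - b * c = -1 := (abs_eq (by norm_num)).mp h1
  have hA1 : e * d - f * c = 1 ∨ e * d - f * c = -1 := by
    have : |e * d - f * c| = 1 := by
      rw [show e * d - f * c = -(c * f - d * e) by ring, abs_neg]; exact h3
    exact (abs_eq (by norm_num)).mp this
  have hB1 : a * f - b * e = 1 ∨ a * f - b * e = -1 := (abs_eq (by norm_num)).mp h2
  rcases hD1 with hD' | hD' <;> rcases hA1 with hA' | hA' <;> rcases hB1 with hB' | hB' <;>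
    rw [hD', hA', hB'] at hDe hDf <;> omega

/-! ### Finset helpers and triangle structure -/

lemma sum3 (f : FareyVertex → ℤ) {x y z : FareyVertex} (hxy : x ≠ y) (hxz : x ≠ z)
    (hyz : y ≠ z) :
    ∑ v ∈ ({x, y, z} : Finset FareyVertex), f v = f x + f y + f z := by
  rw [Finset.sum_insert (by simp [hxy, hxz]), Finset.sum_insert (by simp [hyz]),
    Finset.sum_singleton]
  ring

lemma card_pair_le (a b : FareyVertex) : ({a, b} : Finset FareyVertex).card ≤ 2 :=
  le_trans (Finset.card_insert_le _ _) (by simp)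

lemma distinct3 {s : Finset FareyVertex} {x y z : FareyVertex}
    (h : s = {x, y, z}) (hc : s.card = 3) : x ≠ y ∧ x ≠ z ∧ y ≠ z := by
  subst h
  refine ⟨?_, ?_, ?_⟩ <;> rintro rfl
  · have hsub : ({x, x, z} : Finset FareyVertex) ⊆ {x, z} := by
      intro a ha; simp at ha ⊢; tauto
    have := Finset.card_le_card hsub
    have := card_pair_le x z
    omega
  · have hsub : ({x, y, x} : Finset FareyVertex) ⊆ {x, y} := by
      intro a ha; simp at ha ⊢; tauto
    have := Finset.card_le_card hsub
    have := card_pair_le x y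
    omega
  · have hsub : ({x, y, y} : Finset FareyVertex) ⊆ {x, y} := by
      intro a ha; simp at ha ⊢; tauto
    have := Finset.card_le_card hsub
    have := card_pair_le x y
    omega

lemma tri_verts (T : FareyTriangle) :
    ∃ x y z, x ≠ y ∧ x ≠ z ∧ y ≠ z ∧ T.verts = {x, y, z} :=
  Finset.card_eq_three.mp T.card_eq

lemma tri_det {T : FareyTriangle} {x y : FareyVertex} (hx : x ∈ T.verts) (hy : y ∈ T.verts)
    (hne : x ≠ y) : |fnum x * fden y - fden x * fnum y| = 1 :=
  T.neighbors x hx y hy hne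

lemma std_verts (i : ℤ) :
    (stdTriangle i).verts = {some ((i : ℤ) : ℚ), some ((i + 1 : ℤ) : ℚ), none} := rfl

lemma fnum_int (i : ℤ) : fnum (some ((i : ℤ) : ℚ)) = i := by
  simp [fnum]

lemma fden_int (i : ℤ) : fden (some ((i : ℤ) : ℚ)) = 1 := by
  simp [fden]

lemma fnum_none : fnum none = 1 := rfl
lemma fden_none : fden none = 0 := rfl
lemma fnum_some (r : ℚ) : fnum (some r) = r.num := rfl
lemma fden_some (r : ℚ) : fden (some r) = (r.den : ℤ) := rfl

lemma int_vertex {v : FareyVertex} (h : fden v = 1) : v = some ((fnum v : ℤ) : ℚ) := by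
  apply vertex_ext (fnum_int (fnum v)).symm
  rw [fden_int]; exact h

/-- Any triangle containing `∞` is a standard triangle. -/
lemma none_struct_aux {T : FareyTriangle} {u v : FareyVertex} (hu : u ≠ none) (hv : v ≠ none)
    (huv : u ≠ v) (hverts : T.verts = {u, v, none}) :
    ∃ i : ℤ, T.verts = {some ((i : ℤ) : ℚ), some ((i + 1 : ℤ) : ℚ), none} := by
  have hmemu : u ∈ T.verts := by rw [hverts]; simp
  have hmemv : v ∈ T.verts := by rw [hverts]; simp
  have hmemn : (none : FareyVertex) ∈ T.verts := by rw [hverts]; simp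
  have hdu : fden u = 1 := by
    have h1 := tri_det hmemu hmemn hu
    rw [fden_none, fnum_none, mul_zero, mul_one, zero_sub, abs_neg] at h1
    have h0 := fden_nonneg u
    rcases (abs_eq (by norm_num : (0:ℤ) ≤ 1)).mp h1 with h' | h' <;> omega
  have hdv : fden v = 1 := by
    have h1 := tri_det hmemv hmemn hv
    rw [fden_none, fnum_none, mul_zero, mul_one, zero_sub, abs_neg] at h1
    have h0 := fden_nonneg v
    rcases (abs_eq (by norm_num : (0:ℤ) ≤ 1)).mp h1 with h' | h' <;> omega
  obtain ⟨m, rfl⟩ : ∃ m : ℤ, u = some ((m : ℤ) : ℚ) := ⟨fnum u, int_vertex hdu⟩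
  obtain ⟨n, rfl⟩ : ∃ n : ℤ, v = some ((n : ℤ) : ℚ) := ⟨fnum v, int_vertex hdv⟩
  have hdet := tri_det hmemu hmemv huv
  rw [fnum_int, fnum_int, fden_int, fden_int, mul_one, one_mul] at hdet
  rcases (abs_eq (by norm_num : (0:ℤ) ≤ 1)).mp hdet with h' | h'
  · -- m = n + 1
    refine ⟨n, ?_⟩
    have hmn : m = n + 1 := by omega
    subst hmn
    rw [hverts]
    ext a; simp; tauto
  · refine ⟨m, ?_⟩
    have hmn : n = m + 1 := by omega
    subst hmn
    exact hverts

lemma none_struct {T : FareyTriangle} (h : none ∈ T.verts) :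
    ∃ i : ℤ, T.verts = {some ((i : ℤ) : ℚ), some ((i + 1 : ℤ) : ℚ), none} := by
  obtain ⟨x, y, z, hxy, hxz, hyz, hv⟩ := tri_verts T
  rw [hv] at h
  simp only [Finset.mem_insert, Finset.mem_singleton] at h
  rcases h with rfl | rfl | rfl
  · exact none_struct_aux (Ne.symm hxy) (Ne.symm hxz) hyz
      (by rw [hv]; ext a; simp; tauto)
  · exact none_struct_aux hxy (Ne.symm hyz) hxz (by rw [hv]; ext a; simp; tauto)
  · exact none_struct_aux hxz hyz hxy hv

lemma eq_std_of_verts {T : FareyTriangle} {i : ℤ}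
    (h : T.verts = {some ((i : ℤ) : ℚ), some ((i + 1 : ℤ) : ℚ), none}) : T = stdTriangle i := by
  apply FareyTriangle.ext
  rw [h, std_verts]

/-- Every finite triangle is a mediant triangle. -/
lemma finite_struct {T : FareyTriangle} (h : none ∉ T.verts) :
    ∃ x y z, x ≠ y ∧ x ≠ z ∧ y ≠ z ∧ T.verts = {x, y, z} ∧
      fnum z = fnum x + fnum y ∧ fden z = fden x + fden y ∧ 0 < fden x ∧ 0 < fden y := by
  obtain ⟨x, y, z, hxy, hxz, hyz, hv⟩ := tri_verts T
  have hmx : x ∈ T.verts := by rw [hv]; simp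
  have hmy : y ∈ T.verts := by rw [hv]; simp
  have hmz : z ∈ T.verts := by rw [hv]; simp
  have hpx : 0 < fden x := by
    cases x with
    | none => exact absurd hmx h
    | some r => exact fden_some_pos r
  have hpy : 0 < fden y := by
    cases y with
    | none => exact absurd hmy h
    | some r => exact fden_some_pos r
  have hpz : 0 < fden z := by
    cases z with
    | none => exact absurd hmz h
    | some r => exact fden_some_pos r
  have c := comb (tri_det hmx hmy hxy) (tri_det hmx hmz hxz) (tri_det hmy hmz hyz)
  rcases c with ⟨he, hf⟩ | ⟨he, hf⟩ | ⟨he, hf⟩ | ⟨he, hf⟩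
  · exact ⟨x, y, z, hxy, hxz, hyz, hv, he, hf, hpx, hpy⟩
  · exfalso; omega
  · -- x = z + y
    exact ⟨z, y, x, Ne.symm hyz, Ne.symm hxz, Ne.symm hxy,
      by rw [hv]; ext a; simp; tauto, by omega, by omega, hpz, hpy⟩
  · -- y = z + x
    exact ⟨z, x, y, Ne.symm hxz, Ne.symm hyz, hxy,
      by rw [hv]; ext a; simp; tauto, by omega, by omega, hpz, hpx⟩

/-! ### Explicit triangles and the potential function -/

lemma mk_nd {a b : ℤ} (hb : 0 < b) (hdet : Int.gcd a b = 1) :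
    fnum (mkFarey a b) = a ∧ fden (mkFarey a b) = b := mk_num_den hb hdet

/-- The triangle with parents `a/b`, `c/d` and mediant `(a+c)/(b+d)`. -/
def triOf (a b c d : ℤ) (hb : 0 < b) (hd : 0 < d) (hdet : |a * d - b * c| = 1) :
    FareyTriangle where
  verts := {mkFarey a b, mkFarey c d, mkFarey (a + c) (b + d)}
  card_eq := by
    obtain ⟨hn1, hd1⟩ := mk_num_den hb (coprime_of_det hdet)
    obtain ⟨hn2, hd2⟩ := mk_num_den hd (coprime_of_det
      (by rw [show c * b - d * a = -(a * d - b * c) by ring, abs_neg]; exact hdet))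
    obtain ⟨hn3, hd3⟩ := mk_num_den (by omega : (0:ℤ) < b + d) (coprime_of_det
      (by rw [show (a + c) * d - (b + d) * c = a * d - b * c by ring]; exact hdet))
    have h12 : mkFarey a b ≠ mkFarey c d := by
      intro hh
      rw [hh] at hn1 hd1
      have : a = c := by omega
      have : b = d := by omega
      subst this; subst this
      simp [show a * b - b * a = 0 by ring] at hdet
    have h13 : mkFarey a b ≠ mkFarey (a + c) (b + d) := by
      intro hh; rw [hh] at hd1; omega
    have h23 : mkFarey c d ≠ mkFarey (a + c) (b + d) := by
      intro hh; rw [hh] at hd2; omega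
    rw [Finset.card_insert_of_notMem (by simp [h12, h13]),
      Finset.card_insert_of_notMem (by simp [h23]), Finset.card_singleton]
  neighbors := by
    obtain ⟨hn1, hd1⟩ := mk_num_den hb (coprime_of_det hdet)
    obtain ⟨hn2, hd2⟩ := mk_num_den hd (coprime_of_det
      (by rw [show c * b - d * a = -(a * d - b * c) by ring, abs_neg]; exact hdet))
    obtain ⟨hn3, hd3⟩ := mk_num_den (by omega : (0:ℤ) < b + d) (coprime_of_det
      (by rw [show (a + c) * d - (b + d) * c = a * d - b * c by ring]; exact hdet))
    have n12 : FareyNeighbor (mkFarey a b) (mkFarey c d) := by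
      unfold FareyNeighbor; rw [hn1, hd1, hn2, hd2]; exact hdet
    have n13 : FareyNeighbor (mkFarey a b) (mkFarey (a + c) (b + d)) := by
      unfold FareyNeighbor; rw [hn1, hd1, hn3, hd3]
      rw [show a * (b + d) - b * (a + c) = -(a * d - b * c) * (-1) by ring]
      simpa using hdet
    have n23 : FareyNeighbor (mkFarey c d) (mkFarey (a + c) (b + d)) := by
      unfold FareyNeighbor; rw [hn2, hd2, hn3, hd3]
      rw [show c * (b + d) - d * (a + c) = -(a * d - b * c) by ring, abs_neg]
      exact hdet
    intro x hx y hy hxy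
    simp only [Finset.mem_insert, Finset.mem_singleton] at hx hy
    rcases hx with rfl | rfl | rfl <;> rcases hy with rfl | rfl | rfl <;>
      first
        | exact absurd rfl hxy
        | assumption
        | exact neighbor_symm n12
        | exact neighbor_symm n13
        | exact neighbor_symm n23

lemma triOf_verts (a b c d : ℤ) (hb : 0 < b) (hd : 0 < d) (hdet : |a * d - b * c| = 1) :
    (triOf a b c d hb hd hdet).verts = {mkFarey a b, mkFarey c d, mkFarey (a + c) (b + d)} :=
  rfl

/-- Potential of a (mediant) pair. -/
def Wp (p q : ℤ) : ℕ :=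
  if q ≤ 1 then (p - 1).natAbs
  else if 0 < p then S p.toNat q.toNat - 1 else S (-p).toNat q.toNat

/-- Potential of a triangle: `Wp` of the half-sums of the vertex data. -/
def w (T : FareyTriangle) : ℕ :=
  Wp ((∑ v ∈ T.verts, fnum v) / 2) ((∑ v ∈ T.verts, fden v) / 2)

lemma w_of_verts {T : FareyTriangle} {x y z : FareyVertex} (h : T.verts = {x, y, z})
    (hz1 : fnum z = fnum x + fnum y) (hz2 : fden z = fden x + fden y) :
    w T = Wp (fnum z) (fden z) := by
  obtain ⟨h1, h2, h3⟩ := distinct3 h T.card_eq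
  rw [w, h, sum3 _ h1 h2 h3, sum3 _ h1 h2 h3]
  congr 1
  · omega
  · omega

lemma w_std (i : ℤ) : w (stdTriangle i) = i.natAbs := by
  have h := std_verts i
  obtain ⟨h1, h2, h3⟩ := distinct3 h (stdTriangle i).card_eq
  rw [w, h, sum3 _ h1 h2 h3, sum3 _ h1 h2 h3]
  rw [fnum_int, fnum_int, fnum_none, fden_int, fden_int, fden_none]
  have e1 : (i + (i + 1) + 1) / 2 = i + 1 := by omega
  have e2 : ((1 : ℤ) + 1 + 0) / 2 = 1 := by norm_num
  rw [e1, e2, Wp, if_pos le_rfl]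
  congr 1
  omega

/-! ### Potential arithmetic on edges -/

lemma sign_corr {a b c d : ℤ} (hd : 0 < d) (hb : 0 < b) (hb2 : 2 ≤ b)
    (hdet : a * d - b * c = 1 ∨ a * d - b * c = -1) (ha : a ≠ 0) :
    (0 < a ∧ 0 ≤ c) ∨ (a < 0 ∧ c ≤ 0) := by
  rcases lt_or_gt_of_ne ha with hneg | hpos
  · right
    refine ⟨hneg, ?_⟩
    by_contra hc
    push_neg at hc
    rcases hdet with h | h <;> nlinarith
  · left
    refine ⟨hpos, ?_⟩
    by_contra hc
    push_neg at hc
    rcases hdet with h | h <;> nlinarith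

lemma num_ne_zero_of_den {a b : ℤ} (h : Int.gcd a b = 1) (hb : 2 ≤ b) : a ≠ 0 := by
  intro ha
  subst ha
  rw [Int.gcd_zero_left] at h
  omega

/-- Key edge computation: the mediant triangle has potential one more than its parent. -/
lemma E1 {a b c d : ℤ} (hd : 0 < d) (hbd : d < b) (hdet : |a * d - b * c| = 1) :
    Wp (a + c) (b + d) = Wp a b + 1 := by
  have hb2 : 2 ≤ b := by omega
  have hdet' := (abs_eq (by norm_num : (0:ℤ) ≤ 1)).mp hdet
  have hgab : Int.gcd a b = 1 := coprime_of_det hdet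
  have hgac : Int.gcd (a + c) (b + d) = 1 := coprime_of_det
    (by rw [show (a + c) * d - (b + d) * c = a * d - b * c by ring]; exact hdet)
  have ha : a ≠ 0 := num_ne_zero_of_den hgab hb2
  have hac : a + c ≠ 0 := num_ne_zero_of_den hgac (by omega)
  rcases sign_corr hd (by omega) hb2 hdet' ha with ⟨hpa, hpc⟩ | ⟨hna, hnc⟩
  · -- positive side
    have hac' : 0 < a + c := by omega
    have hL := L (p1 := a.toNat) (q1 := b.toNat) (p2 := c.toNat) (q2 := d.toNat)
      (by omega) (by omega) ?_
    · have e1 : (a + c).toNat = a.toNat + c.toNat := by omega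
      have e2 : (b + d).toNat = b.toNat + d.toNat := by omega
      have hS1 : 1 ≤ S a.toNat b.toNat := S_pos (by omega) (by omega)
      rw [Wp, Wp, if_neg (by omega : ¬(b + d ≤ 1)), if_neg (by omega : ¬(b ≤ 1)),
        if_pos hac', if_pos hpa, e1, e2, hL]
      omega
    · rcases hdet' with h | h
      · right
        have : ((c.toNat * b.toNat + 1 : ℕ) : ℤ) = ((a.toNat * d.toNat : ℕ) : ℤ) := by
          push_cast [Int.toNat_of_nonneg hpa.le, Int.toNat_of_nonneg hpc,
            Int.toNat_of_nonneg hd.le, Int.toNat_of_nonneg (by omega : (0:ℤ) ≤ b)]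
          linarith
        exact_mod_cast this
      · left
        have : ((a.toNat * d.toNat + 1 : ℕ) : ℤ) = ((c.toNat * b.toNat : ℕ) : ℤ) := by
          push_cast [Int.toNat_of_nonneg hpa.le, Int.toNat_of_nonneg hpc,
            Int.toNat_of_nonneg hd.le, Int.toNat_of_nonneg (by omega : (0:ℤ) ≤ b)]
          linarith
        exact_mod_cast this
  · -- negative side
    have hac' : a + c < 0 := by omega
    have hL := L (p1 := (-a).toNat) (q1 := b.toNat) (p2 := (-c).toNat) (q2 := d.toNat)
      (by omega) (by omega) ?_
    · have e1 : (-(a + c)).toNat = (-a).toNat + (-c).toNat := by omega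
      have e2 : (b + d).toNat = b.toNat + d.toNat := by omega
      rw [Wp, Wp, if_neg (by omega : ¬(b + d ≤ 1)), if_neg (by omega : ¬(b ≤ 1)),
        if_neg (by omega : ¬(0 < a + c)), if_neg (by omega : ¬(0 < a)), e1, e2, hL]
    · rcases hdet' with h | h
      · left
        have : (((-a).toNat * d.toNat + 1 : ℕ) : ℤ) = (((-c).toNat * b.toNat : ℕ) : ℤ) := by
          push_cast [Int.toNat_of_nonneg (by omega : (0:ℤ) ≤ -a),
            Int.toNat_of_nonneg (by omega : (0:ℤ) ≤ -c),
            Int.toNat_of_nonneg hd.le, Int.toNat_of_nonneg (by omega : (0:ℤ) ≤ b)]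
          linarith
        exact_mod_cast this
      · right
        have : (((-c).toNat * b.toNat + 1 : ℕ) : ℤ) = (((-a).toNat * d.toNat : ℕ) : ℤ) := by
          push_cast [Int.toNat_of_nonneg (by omega : (0:ℤ) ≤ -a),
            Int.toNat_of_nonneg (by omega : (0:ℤ) ≤ -c),
            Int.toNat_of_nonneg hd.le, Int.toNat_of_nonneg (by omega : (0:ℤ) ≤ b)]
          linarith
        exact_mod_cast this

lemma Wp_two (i : ℤ) : Wp (2 * i + 1) 2 = i.natAbs + 1 := by
  rcases le_or_gt 0 i with h | h
  · have e : (2 * i + 1).toNat = 2 * i.toNat + 1 := by omega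
    rw [Wp, if_neg (by norm_num), if_pos (by omega), e,
      show ((2:ℤ)).toNat = 2 by rfl, S_two]
    omega
  · have e : (-(2 * i + 1)).toNat = 2 * (-i - 1).toNat + 1 := by omega
    rw [Wp, if_neg (by norm_num), if_neg (by omega), e,
      show ((2:ℤ)).toNat = 2 by rfl, S_two]
    omega

lemma w_eq_zero_iff {T : FareyTriangle} (h : w T = 0) : T = stdTriangle 0 := by
  by_cases hn : none ∈ T.verts
  · obtain ⟨i, hi⟩ := none_struct hn
    have := w_std i
    have hT := eq_std_of_verts hi
    rw [hT] at h
    rw [this] at h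
    have : i = 0 := by omega
    subst this
    exact hT
  · exfalso
    obtain ⟨x, y, z, hxy, hxz, hyz, hv, hz1, hz2, hppx, hppy⟩ := finite_struct hn
    rw [w_of_verts hv hz1 hz2] at h
    have hq2 : 2 ≤ fden z := by omega
    have hg : Int.gcd (fnum z) (fden z) = 1 := vertex_coprime z
    have hnz : fnum z ≠ 0 := num_ne_zero_of_den hg hq2
    rw [Wp, if_neg (by omega)] at h
    rcases lt_or_gt_of_ne hnz with hneg | hpos
    · rw [if_neg (by omega)] at h
      have : 1 ≤ S (-fnum z).toNat (fden z).toNat := S_pos (by omega) (by omega)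
      omega
    · rw [if_pos hpos] at h
      have hcop : Nat.Coprime (fnum z).toNat (fden z).toNat := by
        have : (fnum z).natAbs = (fnum z).toNat := by omega
        have h2 : (fden z).natAbs = (fden z).toNat := by omega
        unfold Nat.Coprime
        rw [← this, ← h2]
        exact hg
      have := S_two_ge hcop (by omega) (by omega)
      omega

/-! ### Adjacency analysis -/

lemma den_zero {v : FareyVertex} (h : fden v = 0) : v = none := by
  cases v with
  | none => rfl
  | some r => exfalso; have := fden_some_pos r; omega

lemma vden_pos {v : FareyVertex} (h : v ≠ none) : 0 < fden v := by
  cases v with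
  | none => exact absurd rfl h
  | some r => exact fden_some_pos r

lemma int_some_inj {i j : ℤ} :
    (some ((i : ℤ) : ℚ) : FareyVertex) = some ((j : ℤ) : ℚ) ↔ i = j := by
  constructor
  · intro h
    have h2 : ((i : ℤ) : ℚ) = ((j : ℤ) : ℚ) := by injection h
    exact_mod_cast h2
  · rintro rfl; rfl

lemma w_sum {T : FareyTriangle} {x y z : FareyVertex} (h : T.verts = {x, y, z}) :
    w T = Wp ((fnum x + fnum y + fnum z) / 2) ((fden x + fden y + fden z) / 2) := by
  obtain ⟨h1, h2, h3⟩ := distinct3 h T.card_eq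
  rw [w, h, sum3 _ h1 h2 h3, sum3 _ h1 h2 h3]

lemma adj_decomp {T T' : FareyTriangle} (h : fareyTree.Adj T T') :
    ∃ u v zz zz', u ≠ v ∧ T.verts = {u, v, zz} ∧ T'.verts = {u, v, zz'} ∧
      zz ∉ T'.verts ∧ zz' ∉ T.verts := by
  have hcard : (T.verts ∩ T'.verts).card = 2 := h
  obtain ⟨u, v, huv, hinter⟩ := Finset.card_eq_two.mp hcard
  have hsubT : ({u, v} : Finset FareyVertex) ⊆ T.verts := by
    rw [← hinter]; exact Finset.inter_subset_left
  have hsubT' : ({u, v} : Finset FareyVertex) ⊆ T'.verts := by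
    rw [← hinter]; exact Finset.inter_subset_right
  have hpair : ({u, v} : Finset FareyVertex).card = 2 := Finset.card_pair huv
  have hdT : (T.verts \ {u, v}).card = 1 := by
    rw [Finset.card_sdiff_of_subset hsubT, T.card_eq, hpair]
  have hdT' : (T'.verts \ {u, v}).card = 1 := by
    rw [Finset.card_sdiff_of_subset hsubT', T'.card_eq, hpair]
  obtain ⟨zz, hzz⟩ := Finset.card_eq_one.mp hdT
  obtain ⟨zz', hzz'⟩ := Finset.card_eq_one.mp hdT'
  have hzmem : zz ∈ T.verts \ {u, v} := by rw [hzz]; simp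
  have hzmem' : zz' ∈ T'.verts \ {u, v} := by rw [hzz']; simp
  simp only [Finset.mem_sdiff, Finset.mem_insert, Finset.mem_singleton] at hzmem hzmem'
  refine ⟨u, v, zz, zz', huv, ?_, ?_, ?_, ?_⟩
  · have := Finset.sdiff_union_of_subset hsubT
    rw [hzz] at this
    rw [← this]; ext a; simp; tauto
  · have := Finset.sdiff_union_of_subset hsubT'
    rw [hzz'] at this
    rw [← this]; ext a; simp; tauto
  · intro hmem
    have : zz ∈ T.verts ∩ T'.verts := Finset.mem_inter.mpr ⟨hzmem.1, hmem⟩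
    rw [hinter] at this
    simp at this
    tauto
  · intro hmem
    have : zz' ∈ T.verts ∩ T'.verts := Finset.mem_inter.mpr ⟨hmem, hzmem'.1⟩
    rw [hinter] at this
    simp at this
    tauto

/-- Special edge: parent triangle contains `∞`. -/
lemma adj_core_std {T T' : FareyTriangle} {u v zz zz' : FareyVertex}
    (hT : T.verts = {u, v, zz}) (hT' : T'.verts = {u, v, zz'})
    (hu1 : fden u = 1) (hv1 : fden v = 1)
    (hz1 : fnum zz = fnum u + fnum v) (hz2 : fden zz = fden u + fden v)
    (hz' : zz' = none) : w T = w T' + 1 := by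
  obtain ⟨d1, _, _⟩ := distinct3 hT T.card_eq
  have humem : u ∈ T.verts := by rw [hT]; simp
  have hvmem : v ∈ T.verts := by rw [hT]; simp
  have hdet := tri_det humem hvmem d1
  rw [hu1, hv1, mul_one, one_mul] at hdet
  have hwT : w T = Wp (fnum u + fnum v) 2 := by
    rw [w_of_verts hT hz1 hz2, hz1, hz2, hu1, hv1]; norm_num
  have hwT' : w T' = Wp ((fnum u + fnum v + 1) / 2) 1 := by
    rw [w_sum hT', hz', fnum_none, fden_none, hu1, hv1]; norm_num
  rcases (abs_eq (by norm_num : (0:ℤ) ≤ 1)).mp hdet with h' | h'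
  · -- fnum u = fnum v + 1, min = fnum v
    have e2 : (fnum u + fnum v + 1) / 2 = fnum v + 1 := by omega
    have e1 : fnum u + fnum v = 2 * fnum v + 1 := by omega
    rw [hwT, hwT', e2, e1, Wp_two, Wp, if_pos le_rfl]
    have : (fnum v + 1 - 1).natAbs = (fnum v).natAbs := by omega
    rw [this]
  · -- fnum v = fnum u + 1, min = fnum u
    have e2 : (fnum u + fnum v + 1) / 2 = fnum u + 1 := by omega
    have e1 : fnum u + fnum v = 2 * fnum u + 1 := by omega
    rw [hwT, hwT', e2, e1, Wp_two, Wp, if_pos le_rfl]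
    have : (fnum u + 1 - 1).natAbs = (fnum u).natAbs := by omega
    rw [this]

/-- Core edge computation: `T` has the mediant, `T'` the difference vertex. -/
lemma adj_core {T T' : FareyTriangle} {u v zz zz' : FareyVertex}
    (hT : T.verts = {u, v, zz}) (hT' : T'.verts = {u, v, zz'})
    (hbu : 0 < fden u) (hbv : 0 < fden v)
    (hz1 : fnum zz = fnum u + fnum v) (hz2 : fden zz = fden u + fden v)
    (hzd : (fnum zz' = fnum u - fnum v ∧ fden zz' = fden u - fden v) ∨
           (fnum zz' = fnum v - fnum u ∧ fden zz' = fden v - fden u)) :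
    w T = w T' + 1 := by
  obtain ⟨d1, _, _⟩ := distinct3 hT T.card_eq
  have humem : u ∈ T.verts := by rw [hT]; simp
  have hvmem : v ∈ T.verts := by rw [hT]; simp
  have hdet := tri_det humem hvmem d1
  have hwT : w T = Wp (fnum u + fnum v) (fden u + fden v) := by
    rw [w_of_verts hT hz1 hz2, hz1, hz2]
  rcases hzd with ⟨he, hf⟩ | ⟨he, hf⟩
  · have hge : fden v ≤ fden u := by
      have := fden_nonneg zz'; omega
    rcases eq_or_lt_of_le hge with heq | hlt
    · -- equal denominators : both are 1, zz' = none
      have hb1 : fden u = 1 := by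
        have hd1 : fden u * (fnum u - fnum v) = 1 ∨ fden u * (fnum u - fnum v) = -1 := by
          have : fnum u * fden v - fden u * fnum v = fden u * (fnum u - fnum v) := by
            rw [← heq]; ring
          rw [this] at hdet
          exact (abs_eq (by norm_num : (0:ℤ) ≤ 1)).mp hdet
        have hdvd : fden u ∣ 1 := by
          rcases hd1 with h' | h'
          · exact ⟨fnum u - fnum v, h'.symm⟩
          · exact ⟨fnum v - fnum u, by linarith⟩
        have := Int.le_of_dvd one_pos hdvd
        omega
      have hz'n : zz' = none := den_zero (by omega)
      exact adj_core_std hT hT' hb1 (by omega) hz1 hz2 hz'n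
    · -- fden v < fden u : parent has mediant u
      have hT'' : T'.verts = {v, zz', u} := by rw [hT']; ext a; simp; tauto
      have hwT' : w T' = Wp (fnum u) (fden u) := by
        rw [w_of_verts hT'' (by omega) (by omega)]
      rw [hwT, hwT']
      exact E1 hbv hlt hdet
  · have hge : fden u ≤ fden v := by
      have := fden_nonneg zz'; omega
    rcases eq_or_lt_of_le hge with heq | hlt
    · have hb1 : fden u = 1 := by
        have hd1 : fden u * (fnum u - fnum v) = 1 ∨ fden u * (fnum u - fnum v) = -1 := by
          have : fnum u * fden v - fden u * fnum v = fden u * (fnum u - fnum v) := by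
            rw [heq]; ring
          rw [this] at hdet
          exact (abs_eq (by norm_num : (0:ℤ) ≤ 1)).mp hdet
        have hdvd : fden u ∣ 1 := by
          rcases hd1 with h' | h'
          · exact ⟨fnum u - fnum v, h'.symm⟩
          · exact ⟨fnum v - fnum u, by linarith⟩
        have := Int.le_of_dvd one_pos hdvd
        omega
      have hz'n : zz' = none := den_zero (by omega)
      exact adj_core_std hT hT' hb1 (by omega) hz1 hz2 hz'n
    · -- fden u < fden v : parent has mediant v
      have hT'' : T'.verts = {u, zz', v} := by rw [hT']; ext a; simp; tauto
      have hwT' : w T' = Wp (fnum v) (fden v) := by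
        rw [w_of_verts hT'' (by omega) (by omega)]
      have hdet2 : |fnum v * fden u - fden v * fnum u| = 1 := by
        rw [show fnum v * fden u - fden v * fnum u
          = -(fnum u * fden v - fden u * fnum v) by ring, abs_neg]
        exact hdet
      have := E1 hbu hlt hdet2
      rw [hwT, hwT', show fnum u + fnum v = fnum v + fnum u by ring,
        show fden u + fden v = fden v + fden u by ring]
      exact this

lemma adj_w {T T' : FareyTriangle} (h : fareyTree.Adj T T') :
    w T = w T' + 1 ∨ w T' = w T + 1 := by
  obtain ⟨u, v, zz, zz', huv, hT, hT', hzn, hzn'⟩ := adj_decomp h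
  obtain ⟨_, duz, dvz⟩ := distinct3 hT T.card_eq
  obtain ⟨_, duz', dvz'⟩ := distinct3 hT' T'.card_eq
  have hne_zz : zz ≠ zz' := by
    rintro rfl
    exact hzn (by rw [hT']; simp)
  have humem : u ∈ T.verts := by rw [hT]; simp
  have hvmem : v ∈ T.verts := by rw [hT]; simp
  have hzmem : zz ∈ T.verts := by rw [hT]; simp
  have humem' : u ∈ T'.verts := by rw [hT']; simp
  have hvmem' : v ∈ T'.verts := by rw [hT']; simp
  have hzmem' : zz' ∈ T'.verts := by rw [hT']; simp
  by_cases hnu : u = none ∨ v = none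
  · -- both triangles contain ∞ : standard triangles
    have hnT : none ∈ T.verts := by rcases hnu with rfl | rfl <;> assumption
    have hnT' : none ∈ T'.verts := by rcases hnu with rfl | rfl <;> assumption
    obtain ⟨i, hi⟩ := none_struct hnT
    obtain ⟨j, hj⟩ := none_struct hnT'
    have hTi := eq_std_of_verts hi
    have hTj := eq_std_of_verts hj
    have hij : i ≠ j := by
      rintro rfl
      apply hzn'
      rw [hT]
      have : zz' ∈ T'.verts := hzmem'
      rw [hj, ← hi, hT] at this
      exact this
    -- the shared finite vertex
    obtain ⟨s, hsuv, hsn⟩ : ∃ s, (s = u ∨ s = v) ∧ s ≠ none := by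
      rcases hnu with rfl | rfl
      · exact ⟨v, Or.inr rfl, Ne.symm huv⟩
      · exact ⟨u, Or.inl rfl, huv⟩
    have hsT : s ∈ T.verts := by rcases hsuv with rfl | rfl <;> assumption
    have hsT' : s ∈ T'.verts := by rcases hsuv with rfl | rfl <;> assumption
    rw [hi] at hsT
    rw [hj] at hsT'
    simp only [Finset.mem_insert, Finset.mem_singleton] at hsT hsT'
    have hd1 : i = j ∨ i = j + 1 ∨ i + 1 = j ∨ i + 1 = j + 1 := by
      rcases hsT with rfl | rfl | rfl
      · rcases hsT' with h' | h' | h'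
        · left; exact int_some_inj.mp h'
        · right; left
          have := int_some_inj.mp h'; omega
        · exact absurd h' hsn
      · rcases hsT' with h' | h' | h'
        · right; right; left
          have := int_some_inj.mp h'; omega
        · right; right; right
          have := int_some_inj.mp h'; omega
        · exact absurd h' hsn
      · exact absurd rfl hsn
    rw [hTi, hTj, w_std, w_std]
    omega
  · push_neg at hnu
    have hbu := vden_pos hnu.1
    have hbv := vden_pos hnu.2
    have hduv := tri_det humem hvmem huv
    have combz := comb hduv (tri_det humem hzmem duz) (tri_det hvmem hzmem dvz)
    have combz' := comb hduv (tri_det humem' hzmem' duz') (tri_det hvmem' hzmem' dvz')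
    have hfz := fden_nonneg zz
    have hfz' := fden_nonneg zz'
    rcases combz with ⟨he, hf⟩ | ⟨he, hf⟩ | ⟨he, hf⟩ | ⟨he, hf⟩
    · -- zz is the mediant
      rcases combz' with ⟨he', hf'⟩ | ⟨he', hf'⟩ | ⟨he', hf'⟩ | ⟨he', hf'⟩
      · exact absurd (vertex_ext (by omega) (by omega)) hne_zz
      · exfalso; omega
      · exact Or.inl (adj_core hT hT' hbu hbv he hf (Or.inl ⟨he', hf'⟩))
      · exact Or.inl (adj_core hT hT' hbu hbv he hf (Or.inr ⟨he', hf'⟩))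
    · exfalso; omega
    · -- zz = u - v
      rcases combz' with ⟨he', hf'⟩ | ⟨he', hf'⟩ | ⟨he', hf'⟩ | ⟨he', hf'⟩
      · exact Or.inr (adj_core hT' hT hbu hbv he' hf' (Or.inl ⟨he, hf⟩))
      · exfalso; omega
      · exact absurd (vertex_ext (by omega) (by omega)) hne_zz
      · exfalso
        have h0 : fden zz = 0 := by omega
        have h0' : fden zz' = 0 := by omega
        exact hne_zz ((den_zero h0).trans (den_zero h0').symm)
    · -- zz = v - u
      rcases combz' with ⟨he', hf'⟩ | ⟨he', hf'⟩ | ⟨he', hf'⟩ | ⟨he', hf'⟩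
      · exact Or.inr (adj_core hT' hT hbu hbv he' hf' (Or.inr ⟨he, hf⟩))
      · exfalso; omega
      · exfalso
        have h0 : fden zz = 0 := by omega
        have h0' : fden zz' = 0 := by omega
        exact hne_zz ((den_zero h0).trans (den_zero h0').symm)
      · exact absurd (vertex_ext (by omega) (by omega)) hne_zz

/-! ### Parent construction and distance -/

lemma mk_fid {v : FareyVertex} (h : v ≠ none) : mkFarey (fnum v) (fden v) = v := by
  cases v with
  | none => exact absurd rfl h
  | some r => exact mk_self r

lemma std_adj (i : ℤ) : fareyTree.Adj (stdTriangle i) (stdTriangle (i + 1)) := by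
  have hAB : (some ((i : ℤ) : ℚ) : FareyVertex) ≠ some ((i + 1 : ℤ) : ℚ) := by
    intro hh; have := int_some_inj.mp hh; omega
  have hAC : (some ((i : ℤ) : ℚ) : FareyVertex) ≠ some ((i + 1 + 1 : ℤ) : ℚ) := by
    intro hh; have := int_some_inj.mp hh; omega
  have hBC : (some ((i + 1 : ℤ) : ℚ) : FareyVertex) ≠ some ((i + 1 + 1 : ℤ) : ℚ) := by
    intro hh; have := int_some_inj.mp hh; omega
  have hinter : (stdTriangle i).verts ∩ (stdTriangle (i + 1)).verts
      = {some ((i + 1 : ℤ) : ℚ), none} := by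
    ext a
    simp only [std_verts, Finset.mem_inter, Finset.mem_insert, Finset.mem_singleton]
    constructor
    · rintro ⟨h1 | h1 | h1, h2 | h2 | h2⟩ <;> subst h1 <;> simp_all <;> tauto
    · rintro (rfl | rfl) <;> simp
  show ((stdTriangle i).verts ∩ (stdTriangle (i + 1)).verts).card = 2
  rw [hinter]
  exact Finset.card_pair (by simp)

lemma exists_parent_fin {T : FareyTriangle} {x y z : FareyVertex}
    (hfin : none ∉ T.verts)
    (hv : T.verts = {x, y, z}) (hz1 : fnum z = fnum x + fnum y)
    (hz2 : fden z = fden x + fden y) (hx : 0 < fden x) (hy : 0 < fden y)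
    (hord : fden y ≤ fden x) :
    ∃ T', fareyTree.Adj T T' ∧ w T = w T' + 1 := by
  obtain ⟨dxy, dxz, dyz⟩ := distinct3 hv T.card_eq
  have hxm : x ∈ T.verts := by rw [hv]; simp
  have hym : y ∈ T.verts := by rw [hv]; simp
  have hzm : z ∈ T.verts := by rw [hv]; simp
  have hdet := tri_det hxm hym dxy
  have hwT : w T = Wp (fnum x + fnum y) (fden x + fden y) := by
    rw [w_of_verts hv hz1 hz2, hz1, hz2]
  have hzx : z ≠ x := Ne.symm dxz
  have hzy : z ≠ y := Ne.symm dyz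
  have hzn : z ≠ none := by intro hh; rw [← hh] at hfin; exact hfin hzm
  have hxn : x ≠ none := by intro hh; rw [← hh] at hfin; exact hfin hxm
  have hyn : y ≠ none := by intro hh; rw [← hh] at hfin; exact hfin hym
  rcases eq_or_lt_of_le hord with heq | hlt
  · -- fden x = fden y = 1
    have hb1 : fden x = 1 := by
      have hd1 : fden x * (fnum x - fnum y) = 1 ∨ fden x * (fnum x - fnum y) = -1 := by
        have hh : fnum x * fden y - fden x * fnum y = fden x * (fnum x - fnum y) := by
          rw [← heq]; ring
        rw [hh] at hdet
        exact (abs_eq (by norm_num : (0:ℤ) ≤ 1)).mp hdet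
      have hdvd : fden x ∣ 1 := by
        rcases hd1 with h' | h'
        · exact ⟨fnum x - fnum y, h'.symm⟩
        · exact ⟨fnum y - fnum x, by linarith⟩
      have := Int.le_of_dvd one_pos hdvd
      omega
    have hb1y : fden y = 1 := by omega
    rw [hb1, hb1y, mul_one, one_mul] at hdet
    have hx' := int_vertex hb1
    have hy' := int_vertex hb1y
    rcases (abs_eq (by norm_num : (0:ℤ) ≤ 1)).mp hdet with h' | h'
    · -- fnum x = fnum y + 1 : parent std (fnum y)
      refine ⟨stdTriangle (fnum y), ?_, ?_⟩
      · show ((T.verts) ∩ (stdTriangle (fnum y)).verts).card = 2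
        have hxeq : x = some ((fnum y + 1 : ℤ) : ℚ) := by
          rw [hx']; congr 1; exact_mod_cast congrArg (Int.cast : ℤ → ℚ) (by omega : fnum x = fnum y + 1)
        have hinter : T.verts ∩ (stdTriangle (fnum y)).verts = {x, y} := by
          ext a
          simp only [hv, std_verts, Finset.mem_inter, Finset.mem_insert, Finset.mem_singleton]
          constructor
          · rintro ⟨h1 | h1 | h1, h2⟩
            · tauto
            · tauto
            · exfalso
              subst h1
              rcases h2 with h2 | h2 | h2
              · have : fden a = 1 := by rw [h2]; exact fden_int _
                omega
              · have : fden a = 1 := by rw [h2]; exact fden_int _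
                omega
              · exact hzn h2
          · rintro (rfl | rfl)
            · exact ⟨Or.inl rfl, Or.inr (Or.inl hxeq)⟩
            · exact ⟨Or.inr (Or.inl rfl), Or.inl hy'⟩
        rw [hinter]
        exact Finset.card_pair dxy
      · have e1 : fnum x + fnum y = 2 * fnum y + 1 := by omega
        rw [hwT, hb1, hb1y, e1, w_std]
        norm_num [Wp_two]
    · -- fnum y = fnum x + 1 : parent std (fnum x)
      refine ⟨stdTriangle (fnum x), ?_, ?_⟩
      · show ((T.verts) ∩ (stdTriangle (fnum x)).verts).card = 2
        have hyeq : y = some ((fnum x + 1 : ℤ) : ℚ) := by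
          rw [hy']; congr 1; exact_mod_cast congrArg (Int.cast : ℤ → ℚ) (by omega : fnum y = fnum x + 1)
        have hinter : T.verts ∩ (stdTriangle (fnum x)).verts = {x, y} := by
          ext a
          simp only [hv, std_verts, Finset.mem_inter, Finset.mem_insert, Finset.mem_singleton]
          constructor
          · rintro ⟨h1 | h1 | h1, h2⟩
            · tauto
            · tauto
            · exfalso
              subst h1
              rcases h2 with h2 | h2 | h2
              · have : fden a = 1 := by rw [h2]; exact fden_int _
                omega
              · have : fden a = 1 := by rw [h2]; exact fden_int _
                omega
              · exact hzn h2
          · rintro (rfl | rfl)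
            · exact ⟨Or.inl rfl, Or.inl hx'⟩
            · exact ⟨Or.inr (Or.inl rfl), Or.inr (Or.inl hyeq)⟩
        rw [hinter]
        exact Finset.card_pair dxy
      · have e1 : fnum x + fnum y = 2 * fnum x + 1 := by omega
        rw [hwT, hb1, hb1y, e1, w_std]
        norm_num [Wp_two]
  · -- fden y < fden x : parent triangle via triOf
    have hdet' : |fnum y * (fden x - fden y) - fden y * (fnum x - fnum y)| = 1 := by
      rw [show fnum y * (fden x - fden y) - fden y * (fnum x - fnum y)
        = -(fnum x * fden y - fden x * fnum y) by ring, abs_neg]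
      exact hdet
    set T' := triOf (fnum y) (fden y) (fnum x - fnum y) (fden x - fden y) hy (by omega) hdet'
      with hT'def
    have hgzz : Int.gcd (fnum x - fnum y) (fden x - fden y) = 1 := coprime_of_det
      (by rw [show (fnum x - fnum y) * fden y - (fden x - fden y) * fnum y
        = fnum x * fden y - fden x * fnum y by ring]; exact hdet)
    obtain ⟨hzn', hzd'⟩ := mk_num_den (by omega : (0:ℤ) < fden x - fden y) hgzz
    set zz' := mkFarey (fnum x - fnum y) (fden x - fden y) with hzz'def
    have hT'v : T'.verts = {y, zz', x} := by
      rw [hT'def, triOf_verts, mk_fid hyn]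
      congr 1
      congr 1
      rw [show fnum y + (fnum x - fnum y) = fnum x by ring,
        show fden y + (fden x - fden y) = fden x by ring, mk_fid hxn]
    -- distinctness facts
    have hzz'x : zz' ≠ x := by
      intro hh
      rw [hh] at hzd'
      omega
    have hzz'y : zz' ≠ y := by
      intro hh
      rw [hh] at hzd' hzn'
      have h1 : fden x = 2 * fden y := by omega
      have h2 : fnum x = 2 * fnum y := by omega
      rw [h1, h2, show 2 * fnum y * fden y - 2 * fden y * fnum y = 0 by ring] at hdet
      simp at hdet
    have hzz'z : zz' ≠ z := by
      intro hh
      rw [hh] at hzd'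
      omega
    refine ⟨T', ?_, ?_⟩
    · show ((T.verts) ∩ T'.verts).card = 2
      have hinter : T.verts ∩ T'.verts = {x, y} := by
        ext a
        simp only [hv, hT'v, Finset.mem_inter, Finset.mem_insert, Finset.mem_singleton]
        constructor
        · rintro ⟨h1 | h1 | h1, h2 | h2 | h2⟩ <;> subst h1 <;> tauto
        · rintro (rfl | rfl) <;> tauto
      rw [hinter]
      exact Finset.card_pair dxy
    · have hwT' : w T' = Wp (fnum x) (fden x) := by
        apply w_of_verts hT'v <;> omega
      rw [hwT, hwT']
      exact E1 hy hlt hdet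

lemma exists_parent {T : FareyTriangle} (hne : T ≠ stdTriangle 0) :
    ∃ T', fareyTree.Adj T T' ∧ w T = w T' + 1 := by
  by_cases hn : none ∈ T.verts
  · obtain ⟨i, hi⟩ := none_struct hn
    have hTi := eq_std_of_verts hi
    have hi0 : i ≠ 0 := by
      rintro rfl
      exact hne hTi
    rcases lt_or_gt_of_ne hi0 with hneg | hpos
    · refine ⟨stdTriangle (i + 1), ?_, ?_⟩
      · rw [hTi]; exact std_adj i
      · rw [hTi, w_std, w_std]; omega
    · refine ⟨stdTriangle (i - 1), ?_, ?_⟩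
      · rw [hTi]
        have := fareyTree.adj_symm (std_adj (i - 1))
        rwa [show i - 1 + 1 = i by ring] at this
      · rw [hTi, w_std, w_std]; omega
  · obtain ⟨x, y, z, hxy, hxz, hyz, hv, hz1, hz2, hpx, hpy⟩ := finite_struct hn
    rcases le_total (fden y) (fden x) with hord | hord
    · exact exists_parent_fin hn hv hz1 hz2 hpx hpy hord
    · have hv' : T.verts = {y, x, z} := by rw [hv]; ext a; simp; tauto
      exact exists_parent_fin hn hv' (by omega) (by omega) hpy hpx hord

lemma reach_walk : ∀ (n : ℕ) (T : FareyTriangle), w T = n →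
    ∃ p : fareyTree.Walk T (stdTriangle 0), p.length = n := by
  intro n
  induction n using Nat.strong_induction_on with
  | _ n ih =>
    intro T hT
    rcases Nat.eq_zero_or_pos n with rfl | hpos
    · have hT0 := w_eq_zero_iff hT
      subst hT0
      exact ⟨SimpleGraph.Walk.nil, rfl⟩
    · have hne : T ≠ stdTriangle 0 := by
        rintro rfl
        rw [w_std] at hT
        simp at hT
        omega
      obtain ⟨T', hadj, hw⟩ := exists_parent hne
      obtain ⟨p, hp⟩ := ih (n - 1) (by omega) T' (by omega)
      exact ⟨SimpleGraph.Walk.cons hadj p, by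
        rw [SimpleGraph.Walk.length_cons, hp]; omega⟩

lemma walk_lower_gen {T U : FareyTriangle} (p : fareyTree.Walk T U) :
    w T ≤ p.length + w U := by
  induction p with
  | nil => simp
  | cons h q ih =>
    rcases adj_w h with h' | h' <;> rw [SimpleGraph.Walk.length_cons] <;> omega

lemma walk_lower {T : FareyTriangle} (p : fareyTree.Walk T (stdTriangle 0)) :
    w T ≤ p.length := by
  have := walk_lower_gen p
  rw [w_std] at this
  simpa using this

theorem dist_eq_w (T : FareyTriangle) : fareyTree.dist T (stdTriangle 0) = w T := by
  obtain ⟨p, hp⟩ := reach_walk (w T) T rfl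
  apply le_antisymm
  · exact hp ▸ SimpleGraph.dist_le p
  · obtain ⟨q, hq⟩ := SimpleGraph.Reachable.exists_walk_length_eq_dist ⟨p⟩
    exact hq ▸ walk_lower q

/-! ### Final assembly -/

lemma v0_num_den (p q : ℕ) (hq : 1 ≤ q) (hpq : Nat.Coprime p q) :
    fnum (some ((p : ℚ) / (q : ℚ))) = (p : ℤ) ∧
    fden (some ((p : ℚ) / (q : ℚ))) = (q : ℤ) := by
  have hq0 : (0:ℤ) < (q:ℤ) := by exact_mod_cast hq
  have hcop : Nat.Coprime ((p:ℤ)).natAbs ((q:ℤ)).natAbs := by simpa using hpq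
  have e1 : (p:ℚ) = (((p:ℤ)):ℚ) := by push_cast; ring
  have e2 : (q:ℚ) = (((q:ℤ)):ℚ) := by push_cast; ring
  constructor
  · rw [fnum_some, e1, e2]
    exact Rat.num_div_eq_of_coprime hq0 hcop
  · rw [fden_some, e1, e2]
    exact Rat.den_div_eq_of_coprime hq0 hcop

lemma mk_v0 (p q : ℕ) (hq : 1 ≤ q) :
    mkFarey (p : ℤ) (q : ℤ) = some ((p : ℚ) / (q : ℚ)) := by
  rw [mkFarey, if_neg (by exact_mod_cast (by omega : q ≠ 0))]
  congr 1 <;> push_cast <;> ring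

/-- Any triangle in which `p/q` is a parent has potential at least `S p q`. -/
lemma fan_ge (p q : ℕ) (hp : 1 ≤ p) (hq : 1 ≤ q) {T : FareyTriangle} {x y z : FareyVertex}
    (hv : T.verts = {x, y, z}) (hz1 : fnum z = fnum x + fnum y)
    (hz2 : fden z = fden x + fden y) (hpy : 0 < fden y)
    (hx1 : fnum x = (p : ℤ)) (hx2 : fden x = (q : ℤ)) : S p q ≤ w T := by
  obtain ⟨dxy, _, _⟩ := distinct3 hv T.card_eq
  have hxm : x ∈ T.verts := by rw [hv]; simp
  have hym : y ∈ T.verts := by rw [hv]; simp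
  have hdet := tri_det hxm hym dxy
  rw [hx1, hx2] at hdet
  set γ := fnum y with hγdef
  set δ := fden y with hδdef
  have hdet2 := (abs_eq (by norm_num : (0:ℤ) ≤ 1)).mp hdet
  have hγ : 0 ≤ γ := by
    by_contra hc
    push_neg at hc
    have hp' : (1:ℤ) ≤ (p:ℤ) := by exact_mod_cast hp
    have hq' : (1:ℤ) ≤ (q:ℤ) := by exact_mod_cast hq
    rcases hdet2 with h' | h' <;> nlinarith
  have hwT : w T = Wp ((p:ℤ) + γ) ((q:ℤ) + δ) := by
    rw [w_of_verts hv hz1 hz2, hz1, hz2, hx1, hx2]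
  have hM : S p q + 1 ≤ S (p + γ.toNat) (q + δ.toNat) := by
    apply M hp hq (by omega)
    rcases hdet2 with h' | h'
    · right
      have : ((γ.toNat * q + 1 : ℕ) : ℤ) = ((p * δ.toNat : ℕ) : ℤ) := by
        push_cast [Int.toNat_of_nonneg hγ, Int.toNat_of_nonneg hpy.le]
        linarith
      exact_mod_cast this
    · left
      have : ((p * δ.toNat + 1 : ℕ) : ℤ) = ((γ.toNat * q : ℕ) : ℤ) := by
        push_cast [Int.toNat_of_nonneg hγ, Int.toNat_of_nonneg hpy.le]
        linarith
      exact_mod_cast this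
  rw [hwT, Wp, if_neg (by omega), if_pos (by omega)]
  have e1 : ((p:ℤ) + γ).toNat = p + γ.toNat := by omega
  have e2 : ((q:ℤ) + δ).toNat = q + δ.toNat := by omega
  rw [e1, e2]
  omega

set_option maxHeartbeats 1000000 in
lemma exists_Tm (p q : ℕ) (hp : 1 ≤ p) (hq : 1 ≤ q) (hpq : Nat.Coprime p q) :
    ∃ Tm : FareyTriangle, some ((p : ℚ) / (q : ℚ)) ∈ Tm.verts ∧ w Tm + 1 = S p q ∧
      ∀ T : FareyTriangle, some ((p : ℚ) / (q : ℚ)) ∈ T.verts →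
        S p q ≤ w T + 1 ∧ (w T + 1 ≤ S p q → T = Tm) := by
  set v0 : FareyVertex := some ((p : ℚ) / (q : ℚ)) with hv0def
  have hv0n : fnum v0 = (p:ℤ) := by rw [hv0def]; exact (v0_num_den p q hq hpq).1
  have hv0d : fden v0 = (q:ℤ) := by rw [hv0def]; exact (v0_num_den p q hq hpq).2
  have hv0nn : v0 ≠ none := by rw [hv0def]; simp
  rcases eq_or_lt_of_le hq with hq1 | hq2
  · -- q = 1 : the minimal triangle is `stdTriangle (p-1)`
    have hq1' : q = 1 := hq1.symm
    subst hq1'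
    have hv0 : v0 = some (((p:ℤ)) : ℚ) := by
      have h1 := int_vertex (v := v0) (by rw [hv0d]; norm_num)
      rwa [hv0n] at h1
    refine ⟨stdTriangle ((p:ℤ) - 1), ?_, ?_, ?_⟩
    · rw [std_verts]
      have h2 : v0 = some (((p:ℤ) - 1 + 1 : ℤ) : ℚ) := by
        rw [hv0]; congr 2; ring
      rw [h2]; simp
    · rw [w_std, S_one]; omega
    · intro T hmem
      by_cases hn : none ∈ T.verts
      · obtain ⟨i, hi⟩ := none_struct hn
        have hTi := eq_std_of_verts hi
        rw [hi] at hmem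
        simp only [Finset.mem_insert, Finset.mem_singleton] at hmem
        rw [hv0] at hmem
        have hip : i = (p:ℤ) ∨ i + 1 = (p:ℤ) := by
          rcases hmem with h' | h' | h'
          · left; exact (int_some_inj.mp h').symm
          · right
            have := int_some_inj.mp h'; omega
          · exact absurd h' (by simp)
        rw [hTi, w_std, S_one]
        constructor
        · omega
        · intro hle
          have hieq : i = (p:ℤ) - 1 := by omega
          rw [hieq]
      · obtain ⟨x, y, z, hxy, hxz, hyz, hv, hz1, hz2, hpx, hpy⟩ := finite_struct hn
        rw [hv] at hmem
        simp only [Finset.mem_insert, Finset.mem_singleton] at hmem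
        rcases hmem with h' | h' | h'
        · have hfan := fan_ge p 1 hp le_rfl hv hz1 hz2 hpy
            (by rw [← h']; exact hv0n) (by rw [← h']; exact hv0d)
          rw [S_one] at hfan ⊢
          exact ⟨by omega, fun hle => by omega⟩
        · have hv' : T.verts = {y, x, z} := by rw [hv]; ext a; simp; tauto
          have hfan := fan_ge p 1 hp le_rfl hv' (by omega) (by omega) hpx
            (by rw [← h']; exact hv0n) (by rw [← h']; exact hv0d)
          rw [S_one] at hfan ⊢
          exact ⟨by omega, fun hle => by omega⟩
        · exfalso
          have : fden v0 = fden x + fden y := by rw [h']; exact hz2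
          rw [hv0d] at this
          norm_num at this
          omega
  · -- 2 ≤ q : Bezout parents
    have hq0 : (0:ℤ) < (q:ℤ) := by exact_mod_cast hq
    have hpZ : (1:ℤ) ≤ (p:ℤ) := by exact_mod_cast hp
    have hqZ : (2:ℤ) ≤ (q:ℤ) := by exact_mod_cast hq2
    have hcopZ : IsCoprime ((q:ℤ)) ((p:ℤ)) := by
      rw [Int.isCoprime_iff_gcd_eq_one]
      simpa [Int.gcd_natCast_natCast] using hpq.symm
    obtain ⟨u, v, huv⟩ := hcopZ.symm
    set k : ℤ := (-u) / q with hkdef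
    set q1 : ℤ := (-u) % q with hq1def
    have hq1eq : q1 = -u - q * k := by rw [hq1def, hkdef, Int.emod_def]
    have hq1nn : 0 ≤ q1 := Int.emod_nonneg _ (by omega)
    have hq1lt : q1 < q := Int.emod_lt_of_pos _ hq0
    have hdvd : (1:ℤ) + p * q1 = q * (v - p * k) := by
      rw [hq1eq]; linear_combination -huv
    set p1 : ℤ := v - p * k with hp1def
    have hkey : p1 * q = 1 + (p:ℤ) * q1 := by
      rw [hp1def]; linear_combination -hdvd
    have hq1pos : 0 < q1 := by
      rcases eq_or_lt_of_le hq1nn with h0 | h0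
      · exfalso
        have h1 : p1 * q = 1 := by rw [hkey, ← h0]; ring
        have h2 : (q:ℤ) ∣ 1 := ⟨p1, by linarith [h1]⟩
        have := Int.le_of_dvd one_pos h2
        omega
      · exact h0
    have hp1pos : 0 < p1 := by
      by_contra hc
      push_neg at hc
      have h1 : p1 * q ≤ 0 := mul_nonpos_of_nonpos_of_nonneg hc hq0.le
      have h2 : (0:ℤ) ≤ (p:ℤ) * q1 := mul_nonneg (by omega) hq1nn
      linarith [hkey]
    set q2 : ℤ := (q:ℤ) - q1 with hq2def
    set p2 : ℤ := (p:ℤ) - p1 with hp2def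
    have hq2pos : 0 < q2 := by omega
    have hp2nn : 0 ≤ p2 := by
      have h1 : (p:ℤ) * q1 ≤ (p:ℤ) * ((q:ℤ) - 1) :=
        mul_le_mul_of_nonneg_left (by omega) (by omega)
      have h2 : p1 * q ≤ (p:ℤ) * q := by
        have h3 : (p:ℤ) * ((q:ℤ) - 1) = (p:ℤ) * q - p := by ring
        linarith [hkey]
      have h4 : p1 ≤ (p:ℤ) := le_of_mul_le_mul_right h2 hq0
      omega
    have hdet : p1 * q2 - q1 * p2 = 1 := by
      rw [hq2def, hp2def]; linear_combination hkey
    have hdetabs : |p1 * q2 - q1 * p2| = 1 := by rw [hdet]; norm_num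
    have hg1 : Int.gcd p1 q1 = 1 := coprime_of_det hdetabs
    have hg2 : Int.gcd p2 q2 = 1 := coprime_of_det
      (by rw [show p2 * q1 - q2 * p1 = -(p1 * q2 - q1 * p2) by ring, hdet]; norm_num)
    obtain ⟨hn1, hd1⟩ := mk_num_den hq1pos hg1
    obtain ⟨hn2, hd2⟩ := mk_num_den hq2pos hg2
    set Tm := triOf p1 q1 p2 q2 hq1pos hq2pos hdetabs with hTmdef
    have hTmv : Tm.verts = {mkFarey p1 q1, mkFarey p2 q2, v0} := by
      have e : mkFarey (p1 + p2) (q1 + q2) = v0 := by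
        rw [show p1 + p2 = (p:ℤ) by omega, show q1 + q2 = (q:ℤ) by omega, hv0def]
        exact mk_v0 p q hq
      rw [hTmdef, triOf_verts, e]
    have hwTm : w Tm = S p q - 1 := by
      have h1 : w Tm = Wp (p:ℤ) (q:ℤ) := by
        have := w_of_verts hTmv (by rw [hv0n, hn1, hn2]; omega)
          (by rw [hv0d, hd1, hd2]; omega)
        rwa [hv0n, hv0d] at this
      have e1 : ((p:ℤ)).toNat = p := by omega
      have e2 : ((q:ℤ)).toNat = q := by omega
      rw [h1, Wp, if_neg (by omega), if_pos (by omega), e1, e2]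
    have hSpos := S_pos hp hq
    refine ⟨Tm, by rw [hTmv]; simp, by omega, ?_⟩
    intro T hmem
    by_cases hn : none ∈ T.verts
    · exfalso
      obtain ⟨i, hi⟩ := none_struct hn
      rw [hi] at hmem
      simp only [Finset.mem_insert, Finset.mem_singleton] at hmem
      rcases hmem with h' | h' | h'
      · have : fden v0 = 1 := by rw [h']; exact fden_int _
        omega
      · have : fden v0 = 1 := by rw [h']; exact fden_int _
        omega
      · exact hv0nn h'
    · obtain ⟨x, y, z, hxy, hxz, hyz, hv, hz1, hz2, hpx, hpy⟩ := finite_struct hn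
      rw [hv] at hmem
      simp only [Finset.mem_insert, Finset.mem_singleton] at hmem
      rcases hmem with h' | h' | h'
      · have hfan := fan_ge p q hp hq hv hz1 hz2 hpy
          (by rw [← h']; exact hv0n) (by rw [← h']; exact hv0d)
        exact ⟨by omega, fun hle => by omega⟩
      · have hv' : T.verts = {y, x, z} := by rw [hv]; ext a; simp; tauto
        have hfan := fan_ge p q hp hq hv' (by omega) (by omega) hpx
          (by rw [← h']; exact hv0n) (by rw [← h']; exact hv0d)
        exact ⟨by omega, fun hle => by omega⟩
      · -- v0 is the mediant : T = Tm
        have hzn : fnum z = (p:ℤ) := by rw [← h']; exact hv0n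
        have hzd : fden z = (q:ℤ) := by rw [← h']; exact hv0d
        have hsum1 : fnum x + fnum y = (p:ℤ) := by omega
        have hsum2 : fden x + fden y = (q:ℤ) := by omega
        have hxm : x ∈ T.verts := by rw [hv]; simp
        have hym : y ∈ T.verts := by rw [hv]; simp
        have hdxy := tri_det hxm hym hxy
        have hbr : fnum x * q - p * fden x = fnum x * fden y - fden x * fnum y := by
          rw [← hsum1, ← hsum2]; ring
        have hwT : w T = S p q - 1 := by
          have h1 : w T = Wp (p:ℤ) (q:ℤ) := by
            have := w_of_verts hv hz1 hz2
            rwa [hzn, hzd] at this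
          have e1 : ((p:ℤ)).toNat = p := by omega
          have e2 : ((q:ℤ)).toNat = q := by omega
          rw [h1, Wp, if_neg (by omega), if_pos (by omega), e1, e2]
        refine ⟨by omega, fun _ => ?_⟩
        have parent_unique : ∀ α' β' : ℤ, 1 ≤ β' → β' ≤ (q:ℤ) - 1 →
            α' * q - p * β' = 1 → α' = p1 ∧ β' = q1 := by
          intro α' β' hb1 hb2 heq
          have hdq : (q:ℤ) ∣ (p:ℤ) * (β' - q1) :=
            ⟨α' - p1, by linear_combination hkey - heq⟩
          have hdq2 : (q:ℤ) ∣ (β' - q1) := hcopZ.dvd_of_dvd_mul_left hdq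
          obtain ⟨c, hc⟩ := hdq2
          have hc0 : c = 0 := by
            rcases lt_trichotomy c 0 with h0 | h0 | h0
            · exfalso
              have h5 : (q:ℤ) * c ≤ (q:ℤ) * (-1) := mul_le_mul_of_nonneg_left (by omega) hq0.le
              omega
            · exact h0
            · exfalso
              have h5 : (q:ℤ) * 1 ≤ (q:ℤ) * c := mul_le_mul_of_nonneg_left (by omega) hq0.le
              omega
          have hβ : β' = q1 := by rw [hc0, mul_zero] at hc; omega
          refine ⟨?_, hβ⟩
          have h99 : (α' - p1) * (q:ℤ) = 0 := by
            rw [hβ] at heq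
            linear_combination heq - hkey
          rcases mul_eq_zero.mp h99 with h0 | h0
          · omega
          · omega
        rcases (abs_eq (by norm_num : (0:ℤ) ≤ 1)).mp hdxy with hsign | hsign
        · -- x is the first parent
          obtain ⟨hα, hβ⟩ := parent_unique (fnum x) (fden x) (by omega) (by omega)
            (by linarith [hbr, hsign])
          have hxeq : x = mkFarey p1 q1 := vertex_ext (by rw [hn1]; omega) (by rw [hd1]; omega)
          have hyeq : y = mkFarey p2 q2 := vertex_ext (by rw [hn2]; omega) (by rw [hd2]; omega)
          apply FareyTriangle.ext
          rw [hv, hTmv, hxeq, hyeq, ← h']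
        · -- y is the first parent
          have hbr2 : fnum y * q - p * fden y = 1 := by
            have : fnum y * (q:ℤ) - p * fden y = -(fnum x * fden y - fden x * fnum y) := by
              rw [← hsum1, ← hsum2]; ring
            rw [this, hsign]; ring
          obtain ⟨hα, hβ⟩ := parent_unique (fnum y) (fden y) (by omega) (by omega) hbr2
          have hyeq : y = mkFarey p1 q1 := vertex_ext (by rw [hn1]; omega) (by rw [hd1]; omega)
          have hxeq : x = mkFarey p2 q2 := vertex_ext (by rw [hn2]; omega) (by rw [hd2]; omega)
          apply FareyTriangle.ext
          rw [hv, hTmv, hxeq, hyeq, ← h']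
          ext a; simp; tauto

theorem dist_closest_triangle_eq_S_sub_one (p q : ℕ) (hp : 1 ≤ p) (hq : 1 ≤ q)
    (hpq : Nat.Coprime p q) :
    (∃! Tm : FareyTriangle, some ((p : ℚ) / (q : ℚ)) ∈ Tm.verts ∧
        ∀ T' : FareyTriangle, some ((p : ℚ) / (q : ℚ)) ∈ T'.verts →
          fareyTree.dist Tm (stdTriangle 0) ≤ fareyTree.dist T' (stdTriangle 0)) ∧
    ∀ Tm : FareyTriangle, some ((p : ℚ) / (q : ℚ)) ∈ Tm.verts →
      (∀ T' : FareyTriangle, some ((p : ℚ) / (q : ℚ)) ∈ T'.verts →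
        fareyTree.dist Tm (stdTriangle 0) ≤ fareyTree.dist T' (stdTriangle 0)) →
      (fareyTree.dist Tm (stdTriangle 0) : ℤ) = (S p q : ℤ) - 1 := by
  obtain ⟨Tm, hmem, hwTm, hmin⟩ := exists_Tm p q hp hq hpq
  constructor
  · refine ⟨Tm, ⟨hmem, ?_⟩, ?_⟩
    · intro T' hT'
      rw [dist_eq_w, dist_eq_w]
      have := (hmin T' hT').1
      omega
    · rintro y ⟨hymem, hymin⟩
      have h1 := (hmin y hymem).1
      have h2 := hymin Tm hmem
      rw [dist_eq_w, dist_eq_w] at h2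
      exact (hmin y hymem).2 (by omega)
  · intro Tm' hmem' hmin'
    have h1 := (hmin Tm' hmem').1
    have h2 := hmin' Tm hmem
    rw [dist_eq_w, dist_eq_w] at h2
    rw [dist_eq_w]
    omega
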